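/- Let F be a free group, H a nontrivial subgroup of F, and f ∈ F an element such that f H f^{-1} ⊆ H but f^n ∉ H for all n > 0. Then H is not finitely generated. -/

import Mathlib

open Finsupp
namespace Stmt4
variable {β : Type*}
noncomputable section
def shiftE (β : Type*) (n : ℤ) : ((ℤ × β) →₀ ℚ) ≃+ ((ℤ × β) →₀ ℚ) :=
  Finsupp.domCongr (Equiv.prodCongr (Equiv.addRight n) (Equiv.refl β))
lemma shiftE_apply (n : ℤ) (x : (ℤ × β) →₀ ℚ) (p : ℤ × β) :
    shiftE β n x p = x (p.1 - n, p.2) := by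
  simp [shiftE, Finsupp.domCongr_apply, Finsupp.equivMapDomain_apply, Equiv.prodCongr,
    sub_eq_add_neg, Prod.map]
lemma shiftE_zero (x : (ℤ × β) →₀ ℚ) : shiftE β 0 x = x := by ext p; simp [shiftE_apply]
lemma shiftE_add (m n : ℤ) (x : (ℤ × β) →₀ ℚ) :
    shiftE β (m + n) x = shiftE β m (shiftE β n x) := by ext p; simp [shiftE_apply, sub_sub]
def rho (β : Type*) : Multiplicative ℤ →* MulAut (Multiplicative ((ℤ × β) →₀ ℚ)) where
  toFun n := AddEquiv.toMultiplicative (shiftE β n.toAdd)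
  map_one' := by ext x; simp [AddEquiv.toMultiplicative, shiftE_zero]
  map_mul' m n := by ext x; simp [AddEquiv.toMultiplicative, shiftE_add]
abbrev Gam (β : Type*) := Multiplicative ((ℤ × β) →₀ ℚ) ⋊[rho β] Multiplicative ℤ
variable (π : FreeGroup β →* Multiplicative ℤ)
def Phi : FreeGroup β →* Gam β :=
  FreeGroup.lift fun b =>
    SemidirectProduct.inl (Multiplicative.ofAdd (single ((0:ℤ), b) (1:ℚ))) *
      SemidirectProduct.inr (π (FreeGroup.of b))
lemma Phi_right (g : FreeGroup β) : (Phi π g).right = π g := by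
  have : (SemidirectProduct.rightHom).comp (Phi π) = π := by
    apply FreeGroup.ext_hom; intro a; simp [Phi]
  calc (Phi π g).right = ((SemidirectProduct.rightHom).comp (Phi π)) g := rfl
  _ = π g := by rw [this]
def delta (g : FreeGroup β) : (ℤ × β) →₀ ℚ := Multiplicative.toAdd ((Phi π g).left)
lemma delta_mul (g h : FreeGroup β) :
    delta π (g * h) = delta π g + shiftE β (π g).toAdd (delta π h) := by
  simp only [delta, map_mul, SemidirectProduct.mul_left]
  rw [Phi_right]; rfl
lemma delta_one : delta π 1 = 0 := by simp [delta]
lemma delta_of (b : β) : delta π (FreeGroup.of b) = single ((0:ℤ), b) (1:ℚ) := by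
  simp only [delta, Phi, FreeGroup.lift_apply_of, SemidirectProduct.mul_left]; simp

-- NEW PART
lemma delta_inv (g : FreeGroup β) :
    delta π g⁻¹ = - shiftE β (-(π g).toAdd) (delta π g) := by
  have h0 : delta π (g⁻¹ * g) = delta π g⁻¹ + shiftE β (π g⁻¹).toAdd (delta π g) :=
    delta_mul π g⁻¹ g
  rw [inv_mul_cancel, delta_one] at h0
  have : (π g⁻¹).toAdd = -(π g).toAdd := by simp
  rw [this] at h0
  exact (neg_eq_of_add_eq_zero_left h0.symm).symm

lemma delta_mul_ker {g : FreeGroup β} (hg : π g = 1) (h : FreeGroup β) :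
    delta π (g * h) = delta π g + delta π h := by
  rw [delta_mul, hg]; simp [shiftE_zero]

lemma delta_inv_ker {g : FreeGroup β} (hg : π g = 1) :
    delta π g⁻¹ = - delta π g := by
  rw [delta_inv, hg]; simp [shiftE_zero]

lemma delta_conj {f₀ : FreeGroup β} (hf₀ : π f₀ = Multiplicative.ofAdd 1)
    {h : FreeGroup β} (hh : π h = 1) :
    delta π (f₀ * h * f₀⁻¹) = shiftE β 1 (delta π h) := by
  have h1 : delta π (f₀ * h) = delta π f₀ + shiftE β 1 (delta π h) := by
    rw [delta_mul, hf₀]; rfl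
  have h2 : (π (f₀ * h)).toAdd = 1 := by rw [map_mul, hf₀, hh]; rfl
  rw [delta_mul, h1, h2, delta_inv, hf₀]
  have h3 : shiftE β 1 (-(shiftE β (-(Multiplicative.ofAdd (1:ℤ)).toAdd)) (delta π f₀))
      = - delta π f₀ := by
    rw [map_neg, ← shiftE_add]
    simp [shiftE_zero]
  rw [h3]; abel

lemma delta_conj_pow {f₀ : FreeGroup β} (hf₀ : π f₀ = Multiplicative.ofAdd 1)
    {h : FreeGroup β} (hh : π h = 1) (n : ℕ) :
    delta π (f₀ ^ n * h * (f₀ ^ n)⁻¹) = shiftE β n (delta π h) := by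
  induction n with
  | zero => simp [shiftE_zero]
  | succ n ih =>
    have key : f₀ ^ (n+1) * h * (f₀ ^ (n+1))⁻¹ = f₀ * (f₀ ^ n * h * (f₀ ^ n)⁻¹) * f₀⁻¹ := by
      rw [pow_succ']; group
    have hmem : π (f₀ ^ n * h * (f₀ ^ n)⁻¹) = 1 := by
      simp [map_mul, hh]
    rw [key, delta_conj π hf₀ hmem, ih, ← shiftE_add]
    norm_num [add_comm]

lemma delta_pow (g : FreeGroup β) (k : ℕ) :
    delta π (g ^ k) = ∑ j ∈ Finset.range k,
      shiftE β (j * (π g).toAdd) (delta π g) := by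
  induction k with
  | zero => simp [delta_one]
  | succ k ih =>
    rw [pow_succ, delta_mul, ih, Finset.sum_range_succ]
    congr 2
    · rw [map_pow]
      simp [toAdd_pow, mul_comm]

/-- Elements whose Fox derivative is supported in slot `b'`. -/
def slotSub (b' : β) : Subgroup (FreeGroup β) where
  carrier := {g | ∀ p : ℤ × β, p.2 ≠ b' → delta π g p = 0}
  one_mem' := by intro p _; simp [delta_one]
  mul_mem' := by
    intro g h hg hh p hp
    rw [delta_mul]
    have : (shiftE β (π g).toAdd (delta π h)) p = 0 := by
      rw [shiftE_apply]; exact hh _ hp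
    simp [Finsupp.add_apply, hg p hp, this]
  inv_mem' := by
    intro g hg p hp
    rw [delta_inv]
    have : (shiftE β (-(π g).toAdd) (delta π g)) p = 0 := by
      rw [shiftE_apply]; exact hg _ hp
    simp [this]

lemma seed (hnt : Nontrivial β) :
    ∃ g : FreeGroup β, π g = 1 ∧ delta π g ≠ 0 := by
  obtain ⟨b, b', hbb'⟩ := hnt
  by_cases hc' : (π (FreeGroup.of b')).toAdd = 0
  · refine ⟨FreeGroup.of b', ?_, ?_⟩
    · have : π (FreeGroup.of b') = Multiplicative.ofAdd ((π (FreeGroup.of b')).toAdd) := by simp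
      rw [this, hc']; rfl
    · rw [delta_of]
      exact fun h => one_ne_zero (Finsupp.single_eq_zero.1 h)
  · set c : ℤ := (π (FreeGroup.of b)).toAdd with hc
    set c' : ℤ := (π (FreeGroup.of b')).toAdd with hc'def
    set k₁ : ℕ := c'.natAbs with hk₁
    set k₂ : ℤ := if 0 ≤ c' then -c else c with hk₂
    set g : FreeGroup β := (FreeGroup.of b) ^ k₁ * (FreeGroup.of b') ^ k₂ with hg
    have hπg : π g = 1 := by
      have : π g = Multiplicative.ofAdd ((k₁ : ℤ) * c + k₂ * c') := by
        rw [hg, map_mul, map_pow, map_zpow]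
        have h1 : π (FreeGroup.of b) = Multiplicative.ofAdd c := by simp [hc]
        have h2 : π (FreeGroup.of b') = Multiplicative.ofAdd c' := by simp [hc'def]
        rw [h1, h2, ← ofAdd_nsmul, ← ofAdd_zsmul, ← ofAdd_add]
        try congr 1
        try push_cast
        try ring
      rw [this]
      have hz : (k₁ : ℤ) * c + k₂ * c' = 0 := by
        rcases le_or_gt 0 c' with h | h
        · have h1 : (k₁ : ℤ) = c' := Int.natAbs_of_nonneg h
          rw [hk₂, if_pos h, h1]; ring
        · have h1 : (k₁ : ℤ) = -c' := by
            rw [hk₁]; omega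
          rw [hk₂, if_neg (not_le.2 h), h1]; ring
      rw [hz]; rfl
    refine ⟨g, hπg, ?_⟩
    -- evaluate at (0, b)
    have hval : delta π g ((0:ℤ), b) ≠ 0 := by
      rw [hg, delta_mul]
      have hslot : ∀ p : ℤ × β, p.2 ≠ b' → delta π ((FreeGroup.of b') ^ k₂) p = 0 := by
        have hmem : (FreeGroup.of b') ^ k₂ ∈ slotSub π b' :=
          zpow_mem (by
            intro p hp
            rw [delta_of]
            exact Finsupp.single_eq_of_ne' (by
              intro hcontra
              exact hp (by rw [← hcontra]))) k₂
        exact hmem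
      have h2 : (shiftE β (π ((FreeGroup.of b) ^ k₁)).toAdd
          (delta π ((FreeGroup.of b') ^ k₂))) ((0:ℤ), b) = 0 := by
        rw [shiftE_apply]
        exact hslot _ (by exact hbb')
      rw [Finsupp.add_apply, h2, add_zero]
      rw [delta_pow]
      rw [Finsupp.finset_sum_apply]
      have hterm : ∀ j ∈ Finset.range k₁,
          (shiftE β (j * c) (delta π (FreeGroup.of b))) ((0:ℤ), b)
            = if (j:ℤ) * c = 0 then (1:ℚ) else 0 := by
        intro j _
        rw [shiftE_apply, delta_of]
        by_cases h : (j:ℤ) * c = 0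
        · simp [h, Finsupp.single_apply]
        · rw [if_neg h]
          apply Finsupp.single_eq_of_ne'
          intro hcontra
          apply h
          have h5 : (0:ℤ) = 0 - (j:ℤ)*c := congrArg Prod.fst hcontra
          linarith
      rw [Finset.sum_congr rfl hterm]
      have hk₁pos : 0 < k₁ := Int.natAbs_pos.2 hc'
      by_cases hcz : c = 0
      · rw [Finset.sum_congr rfl (fun j _ => by rw [if_pos (by rw [hcz, mul_zero])])]
        simp only [Finset.sum_const, Finset.card_range, nsmul_eq_mul, mul_one]
        have : (0:ℚ) < k₁ := by exact_mod_cast hk₁pos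
        exact this.ne'
      · have : ∀ j ∈ Finset.range k₁, (if (j:ℤ) * c = 0 then (1:ℚ) else 0)
            = if j = 0 then 1 else 0 := by
          intro j _
          congr 1
          simp [mul_eq_zero, hcz, Int.natCast_eq_zero]
        rw [Finset.sum_congr rfl this, Finset.sum_ite_eq' (Finset.range k₁) 0 (fun _ => (1:ℚ))]
        rw [if_pos (Finset.mem_range.2 hk₁pos)]
        exact one_ne_zero
    intro h0
    rw [h0] at hval
    simp at hval

lemma lin_indep {x : (ℤ × β) →₀ ℚ} (hx : x ≠ 0) (m : ℕ) :
    LinearIndependent ℚ (fun i : Fin m => shiftE β i x) := by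
  rw [Fintype.linearIndependent_iff]
  intro q hq i₀
  by_contra hq₀
  classical
  set s : Finset (Fin m) := Finset.univ.filter (fun i => q i ≠ 0) with hs
  have hsne : s.Nonempty := ⟨i₀, by simp [hs, hq₀]⟩
  set imax : Fin m := s.max' hsne with himax
  have himax_mem : imax ∈ s := s.max'_mem hsne
  have hqimax : q imax ≠ 0 := by
    have := himax_mem
    rw [hs, Finset.mem_filter] at this
    exact this.2
  have hsupp : x.support.Nonempty := Finsupp.support_nonempty_iff.2 hx
  have himgne : (x.support.image Prod.fst).Nonempty := hsupp.image _
  set nstar : ℤ := (x.support.image Prod.fst).max' himgne with hnstar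
  obtain ⟨pstar, hpstar, hpfst⟩ :=
    Finset.mem_image.1 ((x.support.image Prod.fst).max'_mem himgne)
  have hble : ∀ p ∈ x.support, p.1 ≤ nstar := by
    intro p hp
    exact Finset.le_max' _ _ (Finset.mem_image_of_mem _ hp)
  have hxval : x (nstar, pstar.2) ≠ 0 := by
    have : pstar = (nstar, pstar.2) := by
      ext
      · exact hpfst.trans hnstar.symm
      · rfl
    rw [← this]
    exact Finsupp.mem_support_iff.1 hpstar
  set pt : ℤ × β := (nstar + (imax : ℕ), pstar.2) with hpt
  have heval : ∑ i : Fin m, q i * (x (nstar + (imax : ℕ) - (i : ℕ), pstar.2)) = 0 := by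
    have h1 := congrArg (fun v : (ℤ × β) →₀ ℚ => v pt) hq
    simp only [Finsupp.finset_sum_apply, Finsupp.smul_apply, Finsupp.coe_zero,
      Pi.zero_apply, smul_eq_mul] at h1
    rw [← h1]
    refine Finset.sum_congr rfl ?_
    intro i _
    rw [shiftE_apply]
  rw [Finset.sum_eq_single imax ?side1 ?side2] at heval
  case side2 => intro h; exact absurd (Finset.mem_univ _) h
  case side1 =>
    intro b _ hbne
    by_cases hqb : q b = 0
    · rw [hqb, zero_mul]
    · have hbs : b ∈ s := by simp [hs, hqb]
      have hble' : b ≤ imax := Finset.le_max' s b hbs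
      have hblt : (b : ℕ) < (imax : ℕ) := Fin.lt_iff_val_lt_val.1 (lt_of_le_of_ne hble' hbne)
      have hzero : x (nstar + (imax : ℕ) - (b : ℕ), pstar.2) = 0 := by
        by_contra hne0
        have hmem : (nstar + ((imax : ℕ) : ℤ) - ((b : ℕ) : ℤ), pstar.2) ∈ x.support :=
          Finsupp.mem_support_iff.2 hne0
        have := hble _ hmem
        simp only at this
        have hcast : ((b : ℕ) : ℤ) < ((imax : ℕ) : ℤ) := by exact_mod_cast hblt
        omega
      rw [hzero, mul_zero]
  have : nstar + ((imax : ℕ) : ℤ) - ((imax : ℕ) : ℤ) = nstar := by ring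
  rw [this] at heval
  exact hqimax (by
    rcases mul_eq_zero.1 heval with h | h
    · exact h
    · exact absurd h hxval)

/-- Core theorem: in a free group with a homomorphism onto `ℤ`, there is no finitely
generated subgroup of the kernel that "exhausts" the kernel under conjugation. -/
theorem core {β : Type*} (π : FreeGroup β →* Multiplicative ℤ) (H₀ : Subgroup (FreeGroup β))
    (hFG : H₀.FG) (hne : H₀ ≠ ⊥) (f₀ : FreeGroup β) (hπf : π f₀ = Multiplicative.ofAdd 1)
    (hH₀ker : ∀ h ∈ H₀, π h = 1)
    (hconj : ∀ h ∈ H₀, f₀ * h * f₀⁻¹ ∈ H₀)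
    (hker : ∀ g : FreeGroup β, π g = 1 → ∃ n : ℕ, f₀ ^ n * g * (f₀ ^ n)⁻¹ ∈ H₀) : False := by
  rcases subsingleton_or_nontrivial β with hsub | hnt
  · -- degenerate case: at most one generator
    rcases isEmpty_or_nonempty β with hemp | hnon
    · have h1 : ∀ g : FreeGroup β, g = 1 := by
        intro g
        refine FreeGroup.induction_on g rfl (fun b => (IsEmpty.false b).elim)
          (fun b => (IsEmpty.false b).elim) ?_
        intro x y hx hy
        rw [hx, hy, one_mul]
      have := hπf
      rw [h1 f₀, map_one] at this
      have h2 : (0:ℤ) = 1 := congrArg Multiplicative.toAdd this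
      omega
    · obtain ⟨b₀⟩ := hnon
      set j : FreeGroup β →* Multiplicative ℤ :=
        FreeGroup.lift (fun _ => Multiplicative.ofAdd (1:ℤ)) with hj
      set k : Multiplicative ℤ →* FreeGroup β := zpowersHom _ (FreeGroup.of b₀) with hk
      have hkj : ∀ g : FreeGroup β, k (j g) = g := by
        intro g
        have : k.comp j = MonoidHom.id _ := by
          apply FreeGroup.ext_hom
          intro a
          have : a = b₀ := Subsingleton.elim _ _
          simp [hj, hk, this]
        calc k (j g) = (k.comp j) g := rfl
        _ = g := by rw [this]; rfl
      set c : ℤ := (π (FreeGroup.of b₀)).toAdd with hc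
      have hπj : ∀ g : FreeGroup β, π g = (j g) ^ c := by
        intro g
        have : π = (zpowGroupHom c).comp j := by
          apply FreeGroup.ext_hom
          intro a
          have ha : a = b₀ := Subsingleton.elim _ _
          rw [ha]
          show π (FreeGroup.of b₀) = (j (FreeGroup.of b₀)) ^ c
          rw [hj, FreeGroup.lift_apply_of]
          apply Multiplicative.toAdd.injective
          rw [toAdd_zpow]
          simp [hc]
        rw [this]; rfl
      have hcne : c ≠ 0 := by
        intro hc0
        have := hπf
        rw [hπj f₀, hc0, zpow_zero] at this
        have h2 : (0:ℤ) = 1 := congrArg Multiplicative.toAdd this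
        omega
      have hH₀bot : H₀ = ⊥ := by
        rw [Subgroup.eq_bot_iff_forall]
        intro h hh
        have h1 : π h = 1 := hH₀ker h hh
        rw [hπj h] at h1
        have h2 : c * (j h).toAdd = 0 := by
          have := congrArg Multiplicative.toAdd h1
          simpa [toAdd_zpow, mul_comm] using this
        have h3 : (j h).toAdd = 0 := by
          rcases mul_eq_zero.1 h2 with h | h
          · exact absurd h hcne
          · exact h
        have h4 : j h = 1 := by
          have : j h = Multiplicative.ofAdd ((j h).toAdd) := rfl
          rw [this, h3]; rfl
        calc h = k (j h) := (hkj h).symm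
        _ = k 1 := by rw [h4]
        _ = 1 := map_one k
      exact hne hH₀bot
  · -- main case
    obtain ⟨g, hg1, hgδ⟩ := seed π hnt
    obtain ⟨n₀, hmem₀⟩ := hker g hg1
    set h₀ : FreeGroup β := f₀ ^ n₀ * g * (f₀ ^ n₀)⁻¹ with hh₀
    set x₀ : (ℤ × β) →₀ ℚ := delta π h₀ with hx₀def
    have hδh₀ : x₀ = shiftE β n₀ (delta π g) := delta_conj_pow π hπf hg1 n₀
    have hx₀ : x₀ ≠ 0 := by
      rw [hδh₀]
      intro h
      exact hgδ ((shiftE β n₀).injective (by rw [h, map_zero]))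
    -- the sequence of conjugates
    set hseq : ℕ → FreeGroup β := fun i => f₀ ^ i * h₀ * (f₀ ^ i)⁻¹ with hhseq
    have hseqmem : ∀ i, hseq i ∈ H₀ := by
      intro i
      induction i with
      | zero => simpa [hhseq] using hmem₀
      | succ i ih =>
        have key : hseq (i+1) = f₀ * hseq i * f₀⁻¹ := by
          rw [hhseq]
          simp only
          rw [pow_succ']
          group
        rw [key]
        exact hconj _ ih
    have hseqδ : ∀ i : ℕ, delta π (hseq i) = shiftE β i x₀ :=
      fun i => delta_conj_pow π hπf (hH₀ker h₀ (by simpa [hhseq] using hseqmem 0)) i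
    obtain ⟨T, hT⟩ := hFG
    set V : Submodule ℚ ((ℤ × β) →₀ ℚ) := Submodule.span ℚ (delta π '' ↑T) with hV
    have hVmem : ∀ y ∈ H₀, delta π y ∈ V := by
      intro y hy
      rw [← hT] at hy
      refine Subgroup.closure_induction ?_ ?_ ?_ ?_ hy
      · intro t ht
        exact Submodule.subset_span (Set.mem_image_of_mem _ ht)
      · rw [delta_one]; exact zero_mem _
      · intro a b ha hb iha ihb
        have hπa : π a = 1 := hH₀ker a (hT ▸ ha)
        rw [delta_mul_ker π hπa]
        exact add_mem iha ihb
      · intro a ha iha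
        have hπa : π a = 1 := hH₀ker a (hT ▸ ha)
        rw [delta_inv_ker π hπa]
        exact neg_mem iha
    have hfin : Module.Finite ℚ ↥V :=
      Module.Finite.span_of_finite _ (T.finite_toSet.image _)
    set d : ℕ := Module.finrank ℚ ↥V with hd
    set w : Fin (d+1) → ↥V := fun i =>
      ⟨shiftE β i x₀, by rw [← hseqδ i]; exact hVmem _ (hseqmem i)⟩ with hw
    have hli : LinearIndependent ℚ w := by
      apply LinearIndependent.of_comp V.subtype
      have : V.subtype ∘ w = fun i : Fin (d+1) => shiftE β i x₀ := rfl
      rw [this]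
      exact lin_indep hx₀ (d+1)
    have hcard := hli.fintype_card_le_finrank
    rw [Fintype.card_fin] at hcard
    omega

end
end Stmt4


-- plumbing test, with core facts stubbed via axioms for speed
/-- a nontrivial subgroup `H` of a free group that is conjugated into
itself by `f` with `f^n ∉ H` for all `n > 0` is not finitely generated. -/
theorem stmt_4 {α : Type*} (H : Subgroup (FreeGroup α)) (hH : H ≠ ⊥)
    (f : FreeGroup α)
    (hconj : ∀ h ∈ H, f * h * f⁻¹ ∈ H)
    (hf : ∀ n : ℕ, 0 < n → f ^ n ∉ H) :
    ¬ H.FG := by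
  intro hFG
  classical
  have hstep : ∀ (n : ℕ) (g : FreeGroup α),
      f ^ (n+1) * g * (f ^ (n+1))⁻¹ = f * (f ^ n * g * (f ^ n)⁻¹) * f⁻¹ := by
    intro n g; rw [pow_succ']; group
  have hconj_pow : ∀ (n : ℕ), ∀ h ∈ H, f ^ n * h * (f ^ n)⁻¹ ∈ H := by
    intro n
    induction n with
    | zero => intro h hh; simpa using hh
    | succ n ih =>
      intro h hh
      rw [hstep]
      exact hconj _ (ih h hh)
  set K : Subgroup (FreeGroup α) := Subgroup.closure (↑H ∪ {f}) with hK
  have hHK : H ≤ K := by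
    calc H = Subgroup.closure ↑H := (Subgroup.closure_eq H).symm
    _ ≤ K := Subgroup.closure_mono Set.subset_union_left
  have hfK : f ∈ K := Subgroup.subset_closure (Set.mem_union_right _ rfl)
  have hmono : ∀ (g : FreeGroup α) (n m : ℕ), n ≤ m →
      f ^ n * g * (f ^ n)⁻¹ ∈ H → f ^ m * g * (f ^ m)⁻¹ ∈ H := by
    intro g n m hnm hn
    induction m, hnm using Nat.le_induction with
    | base => exact hn
    | succ m _ ih =>
      rw [hstep]
      exact hconj _ ih
  set N : Subgroup (FreeGroup α) :=
    { carrier := {g | ∃ n : ℕ, f ^ n * g * (f ^ n)⁻¹ ∈ H}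
      one_mem' := ⟨0, by simpa using H.one_mem⟩
      mul_mem' := by
        rintro g₁ g₂ ⟨n₁, h1⟩ ⟨n₂, h2⟩
        refine ⟨max n₁ n₂, ?_⟩
        have h1' := hmono g₁ n₁ _ (le_max_left n₁ n₂) h1
        have h2' := hmono g₂ n₂ _ (le_max_right n₁ n₂) h2
        have key : f ^ (max n₁ n₂) * (g₁ * g₂) * (f ^ (max n₁ n₂))⁻¹ =
            (f ^ (max n₁ n₂) * g₁ * (f ^ (max n₁ n₂))⁻¹) *
            (f ^ (max n₁ n₂) * g₂ * (f ^ (max n₁ n₂))⁻¹) := by group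
        rw [key]
        exact H.mul_mem h1' h2'
      inv_mem' := by
        rintro g ⟨n, hn⟩
        refine ⟨n, ?_⟩
        have key : f ^ n * g⁻¹ * (f ^ n)⁻¹ = (f ^ n * g * (f ^ n)⁻¹)⁻¹ := by group
        rw [key]
        exact H.inv_mem hn } with hN
  have hHN : H ≤ N := fun h hh => ⟨0, by simpa using hh⟩
  have hNK : N ≤ K := by
    rintro g ⟨n, hn⟩
    have key : g = (f ^ n)⁻¹ * (f ^ n * g * (f ^ n)⁻¹) * f ^ n := by group
    rw [key]
    exact K.mul_mem (K.mul_mem (K.inv_mem (K.pow_mem hfK n)) (hHK hn)) (K.pow_mem hfK n)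
  have hNpow : ∀ k : ℕ, 0 < k → f ^ k ∉ N := by
    rintro k hk ⟨m, hm⟩
    apply hf k hk
    have key : f ^ m * f ^ k * (f ^ m)⁻¹ = f ^ k := by group
    rwa [key] at hm
  have hfNconj : ∀ g ∈ N, f * g * f⁻¹ ∈ N := by
    rintro g ⟨n, hn⟩
    refine ⟨n, ?_⟩
    have key : f ^ n * (f * g * f⁻¹) * (f ^ n)⁻¹ = f * (f ^ n * g * (f ^ n)⁻¹) * f⁻¹ := by group
    rw [key]
    exact hconj _ hn
  have hfNconj' : ∀ g ∈ N, f⁻¹ * g * f ∈ N := by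
    rintro g ⟨n, hn⟩
    refine ⟨n+1, ?_⟩
    have key : f ^ (n+1) * (f⁻¹ * g * f) * (f ^ (n+1))⁻¹ = f ^ n * g * (f ^ n)⁻¹ := by
      rw [pow_succ]; group
    rw [key]
    exact hn
  have hHNconj : ∀ h ∈ H, ∀ g ∈ N, h * g * h⁻¹ ∈ N := by
    rintro h hh g ⟨n, hn⟩
    refine ⟨n, ?_⟩
    have key : f ^ n * (h * g * h⁻¹) * (f ^ n)⁻¹ =
        (f ^ n * h * (f ^ n)⁻¹) * (f ^ n * g * (f ^ n)⁻¹) * (f ^ n * h⁻¹ * (f ^ n)⁻¹) := by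
      group
    rw [key]
    exact H.mul_mem (H.mul_mem (hconj_pow n h hh) hn) (hconj_pow n h⁻¹ (H.inv_mem hh))
  have hnormal : ∀ k ∈ K, ∀ g ∈ N, k * g * k⁻¹ ∈ N := by
    intro k hk
    have hk' : k ∈ Subgroup.closure (↑H ∪ {f}) := hk
    refine (Subgroup.closure_induction
      (p := fun y _ => (∀ g ∈ N, y * g * y⁻¹ ∈ N) ∧ (∀ g ∈ N, y⁻¹ * g * y ∈ N))
      ?_ ?_ ?_ ?_ hk').1
    · rintro y (hyH | hyf)
      · constructor
        · exact hHNconj y hyH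
        · intro g hg
          have := hHNconj y⁻¹ (H.inv_mem hyH) g hg
          rwa [inv_inv] at this
      · have hyf' : y = f := hyf
        subst hyf'
        constructor
        · exact hfNconj
        · intro g hg
          have := hfNconj' g hg
          simpa using this
    · constructor <;> intro g hg <;> simpa using hg
    · rintro x y _ _ ⟨hx1, hx2⟩ ⟨hy1, hy2⟩
      constructor
      · intro g hg
        have key : x * y * g * (x * y)⁻¹ = x * (y * g * y⁻¹) * x⁻¹ := by group
        rw [key]
        exact hx1 _ (hy1 _ hg)
      · intro g hg
        have key : (x * y)⁻¹ * g * (x * y) = y⁻¹ * (x⁻¹ * g * x) * y := by group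
        rw [key]
        exact hy2 _ (hx2 _ hg)
    · rintro x _ ⟨hx1, hx2⟩
      constructor
      · intro g hg
        have := hx2 g hg
        simpa using this
      · intro g hg
        have := hx1 g hg
        simpa using this
  -- now pass to the subgroup K, which is a free group by Nielsen-Schreier
  set N' : Subgroup ↥K := N.subgroupOf K with hN'
  haveI hNnorm : N'.Normal := by
    constructor
    intro n hn k
    rw [Subgroup.mem_subgroupOf] at hn ⊢
    have : ((k * n * k⁻¹ : ↥K) : FreeGroup α) = (k : FreeGroup α) * n * (k : FreeGroup α)⁻¹ := rfl
    rw [this]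
    exact hnormal _ k.2 _ hn
  set fK : ↥K := ⟨f, hfK⟩ with hfKdef
  set e : Multiplicative ℤ →* (↥K ⧸ N') := zpowersHom _ (QuotientGroup.mk' N' fK) with he
  have hgen : ∀ (x : FreeGroup α) (hx : x ∈ K),
      ∃ n : ℤ, QuotientGroup.mk' N' ⟨x, hx⟩ = (QuotientGroup.mk' N' fK) ^ n := by
    intro x hx
    have hx' : x ∈ Subgroup.closure (↑H ∪ {f}) := hx
    refine Subgroup.closure_induction
      (p := fun y hy => ∃ n : ℤ,
        QuotientGroup.mk' N' ⟨y, show y ∈ K from hy⟩ = (QuotientGroup.mk' N' fK) ^ n)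
      ?_ ?_ ?_ ?_ hx'
    · rintro y (hyH | hyf)
      · refine ⟨0, ?_⟩
        rw [zpow_zero]
        rw [QuotientGroup.mk'_apply, QuotientGroup.eq_one_iff]
        exact Subgroup.mem_subgroupOf.2 (hHN hyH)
      · have hyf' : y = f := hyf
        subst hyf'
        exact ⟨1, by rw [zpow_one]⟩
    · refine ⟨0, ?_⟩
      rw [zpow_zero]
      rw [QuotientGroup.mk'_apply, QuotientGroup.eq_one_iff]
      exact N'.one_mem'
    · rintro y z hy hz ⟨n₁, h1⟩ ⟨n₂, h2⟩
      refine ⟨n₁ + n₂, ?_⟩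
      have hyz : (⟨y * z, show y*z ∈ K from mul_mem hy hz⟩ : ↥K)
          = ⟨y, hy⟩ * ⟨z, hz⟩ := rfl
      rw [hyz, map_mul, h1, h2, zpow_add]
    · rintro y hy ⟨n, h1⟩
      refine ⟨-n, ?_⟩
      have hyi : (⟨y⁻¹, show y⁻¹ ∈ K from inv_mem hy⟩ : ↥K) = (⟨y, hy⟩ : ↥K)⁻¹ := rfl
      rw [hyi, map_inv, h1, zpow_neg]
  have hesurj : Function.Surjective e := by
    intro q
    obtain ⟨k, rfl⟩ := QuotientGroup.mk'_surjective N' q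
    obtain ⟨n, hn⟩ := hgen k.1 k.2
    refine ⟨Multiplicative.ofAdd n, ?_⟩
    rw [he, zpowersHom_apply]
    have : (⟨k.1, k.2⟩ : ↥K) = k := rfl
    rw [this] at hn
    simp only [toAdd_ofAdd]
    exact hn.symm
  have heinj : Function.Injective e := by
    rw [injective_iff_map_eq_one]
    intro a ha
    rw [he, zpowersHom_apply] at ha
    have hfn : fK ^ (a.toAdd) ∈ N' := by
      rw [← QuotientGroup.eq_one_iff]
      rw [← map_zpow] at ha
      exact ha
    rw [Subgroup.mem_subgroupOf] at hfn
    have hfn' : (f : FreeGroup α) ^ (a.toAdd) ∈ N := by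
      have : ((fK ^ (a.toAdd) : ↥K) : FreeGroup α) = f ^ (a.toAdd) := by
        rw [hfKdef]
        simp
      rwa [this] at hfn
    have hn0 : a.toAdd = 0 := by
      by_contra hne0
      rcases lt_or_gt_of_ne hne0 with hneg | hpos
      · apply hNpow (-a.toAdd).toNat (by omega)
        have h2 : (f ^ (a.toAdd))⁻¹ ∈ N := N.inv_mem hfn'
        rw [← zpow_neg] at h2
        have h3 : ((-a.toAdd).toNat : ℤ) = -a.toAdd := Int.toNat_of_nonneg (by omega)
        rw [← zpow_natCast, h3]
        exact h2
      · apply hNpow (a.toAdd).toNat (by omega)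
        have h3 : ((a.toAdd).toNat : ℤ) = a.toAdd := Int.toNat_of_nonneg (by omega)
        rw [← zpow_natCast, h3]
        exact hfn'
    have : a = Multiplicative.ofAdd 0 := by
      rw [← hn0]
      rfl
    rw [this]
    rfl
  set eIso : Multiplicative ℤ ≃* (↥K ⧸ N') := MulEquiv.ofBijective e ⟨heinj, hesurj⟩ with heIso
  set piK : ↥K →* Multiplicative ℤ :=
    eIso.symm.toMonoidHom.comp (QuotientGroup.mk' N') with hpiK
  have hpiKf : piK fK = Multiplicative.ofAdd 1 := by
    have h1 : eIso (Multiplicative.ofAdd 1) = QuotientGroup.mk' N' fK := by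
      show e (Multiplicative.ofAdd 1) = _
      rw [he, zpowersHom_apply]
      simp
    have h2 : piK fK = eIso.symm (QuotientGroup.mk' N' fK) := rfl
    rw [h2, ← h1, MulEquiv.symm_apply_apply]
  have hpiKN : ∀ k : ↥K, piK k = 1 ↔ (k : FreeGroup α) ∈ N := by
    intro k
    have h2 : piK k = eIso.symm (QuotientGroup.mk' N' k) := rfl
    rw [h2]
    rw [MulEquiv.symm_apply_eq, map_one]
    rw [QuotientGroup.mk'_apply, QuotientGroup.eq_one_iff]
    exact Subgroup.mem_subgroupOf
  -- Nielsen–Schreier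
  set θ : FreeGroup (IsFreeGroup.Generators ↥K) ≃* ↥K := IsFreeGroup.mulEquiv ↥K with hθ
  set pi0 : FreeGroup (IsFreeGroup.Generators ↥K) →* Multiplicative ℤ :=
    piK.comp θ.toMonoidHom with hpi0
  set f₀ : FreeGroup (IsFreeGroup.Generators ↥K) := θ.symm fK with hf₀
  set H₀ : Subgroup (FreeGroup (IsFreeGroup.Generators ↥K)) :=
    (H.subgroupOf K).comap θ.toMonoidHom with hH₀
  have hmemH₀ : ∀ x, x ∈ H₀ ↔ ((θ x : ↥K) : FreeGroup α) ∈ H := by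
    intro x
    rw [hH₀, Subgroup.mem_comap]
    exact Subgroup.mem_subgroupOf
  have hpi0f₀ : pi0 f₀ = Multiplicative.ofAdd 1 := by
    rw [hpi0, hf₀]
    show piK (θ (θ.symm fK)) = _
    rw [MulEquiv.apply_symm_apply]
    exact hpiKf
  have hH₀ker : ∀ h ∈ H₀, pi0 h = 1 := by
    intro h hh
    rw [hmemH₀] at hh
    show piK (θ h) = 1
    rw [hpiKN]
    exact hHN hh
  have hconj₀ : ∀ h ∈ H₀, f₀ * h * f₀⁻¹ ∈ H₀ := by
    intro h hh
    rw [hmemH₀] at hh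
    rw [hmemH₀]
    have h1 : θ (f₀ * h * f₀⁻¹) = fK * θ h * fK⁻¹ := by
      rw [map_mul, map_mul, map_inv, hf₀, MulEquiv.apply_symm_apply]
    rw [h1]
    have h2 : ((fK * θ h * fK⁻¹ : ↥K) : FreeGroup α) = f * (θ h : FreeGroup α) * f⁻¹ := rfl
    rw [h2]
    exact hconj _ hh
  have hker₀ : ∀ g, pi0 g = 1 → ∃ n : ℕ, f₀ ^ n * g * (f₀ ^ n)⁻¹ ∈ H₀ := by
    intro g hg
    have h1 : ((θ g : ↥K) : FreeGroup α) ∈ N := by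
      rw [← hpiKN]
      exact hg
    obtain ⟨n, hn⟩ := h1
    refine ⟨n, ?_⟩
    rw [hmemH₀]
    have h2 : θ (f₀ ^ n * g * (f₀ ^ n)⁻¹) = fK ^ n * θ g * (fK ^ n)⁻¹ := by
      rw [map_mul, map_mul, map_inv, map_pow, hf₀, MulEquiv.apply_symm_apply]
    rw [h2]
    have h3 : ((fK ^ n * θ g * (fK ^ n)⁻¹ : ↥K) : FreeGroup α)
        = f ^ n * (θ g : FreeGroup α) * (f ^ n)⁻¹ := by
      push_cast
      rfl
    rw [h3]
    exact hn
  have hH₀ne : H₀ ≠ ⊥ := by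
    have hex : ∃ x ∈ H, x ≠ 1 := by
      by_contra hcon
      push_neg at hcon
      exact hH ((Subgroup.eq_bot_iff_forall H).2 hcon)
    obtain ⟨h₁, hh₁H, hh₁⟩ := hex
    intro hbot
    have hx₁ : θ.symm ⟨h₁, hHK hh₁H⟩ ∈ H₀ := by
      rw [hmemH₀, MulEquiv.apply_symm_apply]
      exact hh₁H
    rw [hbot, Subgroup.mem_bot] at hx₁
    apply hh₁
    have := congrArg θ hx₁
    rw [MulEquiv.apply_symm_apply, map_one] at this
    exact congrArg Subtype.val this
  have hFG₀ : H₀.FG := by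
    obtain ⟨T, hT⟩ := hFG
    set S' : Set ↥K := {x : ↥K | (x : FreeGroup α) ∈ T} with hS'
    have hTH : ∀ t ∈ T, t ∈ H := by
      intro t ht
      rw [← hT]
      exact Subgroup.subset_closure ht
    have himg : K.subtype '' S' = ↑T := by
      ext t
      constructor
      · rintro ⟨x, hx, rfl⟩
        exact hx
      · intro ht
        exact ⟨⟨t, hHK (hTH t ht)⟩, ht, rfl⟩
    have h2 : (Subgroup.closure S').map K.subtype = H := by
      rw [MonoidHom.map_closure, himg, hT]
    have h1 : (H.subgroupOf K).map K.subtype = H := by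
      rw [Subgroup.subgroupOf_map_subtype]
      exact inf_eq_left.2 hHK
    have h3 : Subgroup.closure S' = H.subgroupOf K :=
      Subgroup.map_injective K.subtype_injective (h2.trans h1.symm)
    have h4 : H₀ = Subgroup.closure (⇑θ.symm '' S') := by
      have h5 : Subgroup.closure (⇑θ.symm '' S') = (Subgroup.closure S').map θ.symm.toMonoidHom := by
        rw [MonoidHom.map_closure]
        rfl
      rw [h5, h3, hH₀]
      ext x
      rw [Subgroup.mem_comap, Subgroup.mem_map]
      constructor
      · intro hx
        exact ⟨θ x, hx, θ.symm_apply_apply x⟩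
      · rintro ⟨y, hy, hyx⟩
        have : θ x = y := by
          rw [← hyx]
          exact θ.apply_symm_apply y
        show θ x ∈ H.subgroupOf K
        rw [this]
        exact hy
    rw [Subgroup.fg_iff, h4]
    refine ⟨⇑θ.symm '' S', rfl, ?_⟩
    have hS'fin : S'.Finite := T.finite_toSet.preimage (Subtype.val_injective.injOn)
    exact hS'fin.image _
  exact absurd (Stmt4.core pi0 H₀ hFG₀ hH₀ne f₀ hpi0f₀ hH₀ker hconj₀ hker₀) id
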